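/- arXiv:2509.01698 — 2 statements merged into one kernel-verified Lean document; each statement's English description precedes it below -/
import Mathlib

section
/- Let n ≥ 1 and k ≥ 3 be integers, let k_1, …, k_{2n+1} be positive integers, and let G be the clique expansion C_{2n+1}[k_1, …, k_{2n+1}] of the odd cycle C_{2n+1}. Then G is k-colorable if and only if both of the following hold: (i) k_i + k_{i+1} ≤ k for every i (indices taken modulo 2n+1), and (ii) k_1 + k_2 + ⋯ + k_{2n+1} ≤ n·k. -/
open SimpleGraph Finset

/-- The cycle graph on `Fin p` (for `p ≥ 3` this is the cycle `C_p`). -/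
def cycleG (p : ℕ) [NeZero p] : SimpleGraph (Fin p) where
  Adj i j := i ≠ j ∧ (i + 1 = j ∨ j + 1 = i)
  symm := by
    refine ⟨?_⟩
    rintro i j ⟨h, h'⟩
    exact ⟨h.symm, h'.symm⟩
  loopless := by
    refine ⟨?_⟩
    rintro i ⟨h, _⟩
    exact h rfl

/-- The clique expansion `C_p[k 0, …, k (p-1)]` of the cycle `C_p`:
vertices of the cycle are replaced by cliques of the prescribed sizes, and
all edges are added between cyclically consecutive cliques. -/
def cliqueExpansion (p : ℕ) [NeZero p] (k : Fin p → ℕ) : SimpleGraph (Σ i : Fin p, Fin (k i)) where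
  Adj a b := a ≠ b ∧ (a.1 = b.1 ∨ a.1 + 1 = b.1 ∨ b.1 + 1 = a.1)
  symm := by
    refine ⟨?_⟩
    rintro a b ⟨h, h'⟩
    refine ⟨h.symm, ?_⟩
    rcases h' with h' | h' | h'
    · exact Or.inl h'.symm
    · exact Or.inr (Or.inr h')
    · exact Or.inr (Or.inl h')
  loopless := by
    refine ⟨?_⟩
    rintro a ⟨h, _⟩
    exact h rfl

/-- The join `G ⊕ H` of two graphs: disjoint union plus all edges in between. -/
def joinG {α β : Type*} (G : SimpleGraph α) (H : SimpleGraph β) : SimpleGraph (α ⊕ β) where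
  Adj x y :=
    match x, y with
    | Sum.inl a, Sum.inl b => G.Adj a b
    | Sum.inr a, Sum.inr b => H.Adj a b
    | _, _ => True
  symm := by
    refine ⟨?_⟩
    rintro (a | a) (b | b) h
    · exact G.adj_symm h
    · trivial
    · trivial
    · exact H.adj_symm h
  loopless := by
    refine ⟨?_⟩
    rintro (a | a) h
    · exact G.irrefl h
    · exact H.irrefl h

/-- The bull: a triangle with two pendant edges. -/
def bull : SimpleGraph (Fin 5) :=
  SimpleGraph.fromRel (fun a b =>
    (a = 0 ∧ b = 1) ∨ (a = 1 ∧ b = 2) ∨ (a = 2 ∧ b = 3) ∨ (a = 3 ∧ b = 4) ∨ (a = 1 ∧ b = 3))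

/-- The claw `K_{1,3}`. -/
def claw : SimpleGraph (Fin 4) :=
  SimpleGraph.fromRel (fun a b => a = 0 ∧ b ≠ 0)

/-- The chair: the claw with one edge subdivided once. -/
def chair : SimpleGraph (Fin 5) :=
  SimpleGraph.fromRel (fun a b =>
    (a = 0 ∧ b = 1) ∨ (a = 0 ∧ b = 2) ∨ (a = 0 ∧ b = 3) ∨ (a = 3 ∧ b = 4))

/-- `G` contains `H` as a (not necessarily induced) subgraph. -/
def ContainsSub {V W : Type*} (G : SimpleGraph V) (H : SimpleGraph W) : Prop :=
  ∃ f : H →g G, Function.Injective f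

/-- The independence number of a finite graph. -/
noncomputable def indepNum {V : Type*} [Fintype V] (G : SimpleGraph V) : ℕ :=
  sSup {n | ∃ s : Finset V, s.card = n ∧ ∀ a ∈ s, ∀ b ∈ s, a ≠ b → ¬ G.Adj a b}

/-- Clique sizes of the spindle graph `M_{3i+1} = C_{2i+1}[2,1,2,1,…,2,1,1]`. -/
def spindleKs (i : ℕ) : Fin (2 * i + 1) → ℕ :=
  fun j => if j.val % 2 = 0 ∧ j.val < 2 * i then 2 else 1

/-- Clique sizes `[2,…,2,1,3,1,3,1,…,3,1]`: `a` copies of `2`, then a `1`,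
then alternating `3,1`-pairs up to length `p`. -/
def patternKs (p a : ℕ) : Fin p → ℕ :=
  fun j => if j.val < a then 2 else if (j.val - a) % 2 = 0 then 1 else 3


lemma aux_mod_ne (k a t : ℕ) (h1 : 1 ≤ t) (h2 : t < k) : a % k ≠ (a + t) % k := by
  intro h
  have hd : k ∣ (a + t - a) := (Nat.modEq_iff_dvd' (Nat.le_add_right a t)).mp h
  simp at hd
  have := Nat.le_of_dvd (by omega) hd
  omega

lemma aux_greedy (c : ℕ → ℕ) (G : ℕ) (m : ℕ) :
    ∑ j ∈ Finset.range m, min (c j) (G - ∑ i ∈ Finset.range j, c i) =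
      min G (∑ j ∈ Finset.range m, c j) := by
  induction m with
  | zero => simp
  | succ m ih =>
    rw [Finset.sum_range_succ, ih, Finset.sum_range_succ]
    omega

lemma aux_cycle_indep {n : ℕ} (S : Finset (Fin (2*n+1))) (h : ∀ i ∈ S, i + 1 ∉ S) :
    S.card ≤ n := by
  have hinj : Function.Injective (fun x : Fin (2*n+1) => x + 1) := add_left_injective 1
  have hdisj : Disjoint S (S.image (fun x => x + 1)) := by
    rw [Finset.disjoint_left]
    intro a ha hai
    obtain ⟨i, hi, hie⟩ := Finset.mem_image.mp hai
    exact h i hi (hie ▸ ha)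
  have h1 : (S ∪ S.image (fun x => x + 1)).card = S.card + S.card := by
    rw [Finset.card_union_of_disjoint hdisj, Finset.card_image_of_injective _ hinj]
  have h2 : (S ∪ S.image (fun x => x + 1)).card ≤ 2*n+1 := by
    have := Finset.card_le_univ (S ∪ S.image (fun x => x + 1))
    simpa using this
  omega

/-- For `n ≥ 1`, `k ≥ 3` and positive clique sizes, the clique
expansion `C_{2n+1}[k_1,…,k_{2n+1}]` is `k`-colorable iff consecutive clique sizes
sum to at most `k` and the total of all clique sizes is at most `n·k`. -/
theorem cliqueExpansion_colorable_iff (n k : ℕ) (hn : 1 ≤ n) (hk : 3 ≤ k)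
    (ks : Fin (2 * n + 1) → ℕ) (hks : ∀ i, 1 ≤ ks i) :
    (cliqueExpansion (2 * n + 1) ks).Colorable k ↔
      (∀ i : Fin (2 * n + 1), ks i + ks (i + 1) ≤ k) ∧ (∑ i, ks i ≤ n * k) := by
  have hp0 : 0 < 2*n+1 := by omega
  have hone : (1 : Fin (2*n+1)).val = 1 := by
    rw [Fin.val_one', Nat.mod_eq_of_lt (by omega)]
  have hvadd : ∀ i : Fin (2*n+1), (i + 1).val = (i.val + 1) % (2*n+1) := by
    intro i; rw [Fin.val_add, hone]
  have hne_succ : ∀ i : Fin (2*n+1), i ≠ i + 1 := by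
    intro i h
    have hv := congrArg Fin.val h
    rw [hvadd] at hv
    have hi := i.isLt
    rcases Nat.lt_or_ge (i.val + 1) (2*n+1) with hlt | hge
    · rw [Nat.mod_eq_of_lt hlt] at hv; omega
    · have : i.val + 1 = 2*n+1 := by omega
      rw [this, Nat.mod_self] at hv; omega
  constructor
  · rintro ⟨C⟩
    have hadj_same : ∀ (i : Fin (2*n+1)) (v w : Fin (ks i)), v ≠ w →
        (cliqueExpansion (2*n+1) ks).Adj ⟨i, v⟩ ⟨i, w⟩ := by
      intro i v w hvw
      refine ⟨?_, Or.inl rfl⟩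
      intro h
      apply hvw
      simpa using h
    have hadj_next : ∀ (i j : Fin (2*n+1)) (v : Fin (ks i)) (w : Fin (ks j)), i + 1 = j →
        (cliqueExpansion (2*n+1) ks).Adj ⟨i, v⟩ ⟨j, w⟩ := by
      intro i j v w hij
      refine ⟨?_, Or.inr (Or.inl hij)⟩
      intro h
      have hfst : i = j := congrArg Sigma.fst h
      exact hne_succ i (hfst.trans hij.symm)
    constructor
    · intro i
      have hinj : Function.Injective (fun x : Fin (ks i) ⊕ Fin (ks (i+1)) =>
          Sum.elim (fun v => C ⟨i, v⟩) (fun w => C ⟨i+1, w⟩) x) := by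
        rintro (v | v) (w | w) hcw <;>
          simp only [Sum.elim_inl, Sum.elim_inr] at hcw
        · have : v = w := by
            by_contra hvw
            exact C.valid (hadj_same i v w hvw) hcw
          rw [this]
        · exact absurd hcw (C.valid (hadj_next i (i+1) v w rfl))
        · exact absurd hcw.symm (C.valid (hadj_next i (i+1) w v rfl))
        · have : v = w := by
            by_contra hvw
            exact C.valid (hadj_same (i+1) v w hvw) hcw
          rw [this]
      have hcard := Fintype.card_le_of_injective _ hinj
      simpa using hcard
    · classical
      have hbound : ∀ c : Fin k,
          (Finset.univ.filter (fun x : (Σ i : Fin (2*n+1), Fin (ks i)) => C x = c)).card ≤ n := by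
        intro c
        set F := Finset.univ.filter (fun x : (Σ i : Fin (2*n+1), Fin (ks i)) => C x = c) with hF
        have hinjOn : Set.InjOn Sigma.fst (F : Set ((i : Fin (2*n+1)) × Fin (ks i))) := by
          intro x hx y hy hxy
          by_contra hne
          have hadj : (cliqueExpansion (2*n+1) ks).Adj x y := ⟨hne, Or.inl hxy⟩
          have hval := C.valid hadj
          simp only [hF, Finset.mem_coe, Finset.mem_filter, Finset.mem_univ, true_and] at hx hy
          rw [hx, hy] at hval; exact hval rfl
        have hcardT : (F.image Sigma.fst).card = F.card := Finset.card_image_of_injOn hinjOn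
        have hT : ∀ i ∈ F.image Sigma.fst, i + 1 ∉ F.image Sigma.fst := by
          intro i hi hi1
          obtain ⟨x, hx, hxi⟩ := Finset.mem_image.mp hi
          obtain ⟨y, hy, hyi⟩ := Finset.mem_image.mp hi1
          have hxy : x ≠ y := by
            intro h
            rw [h, hyi] at hxi
            exact hne_succ i hxi.symm
          have hadj : (cliqueExpansion (2*n+1) ks).Adj x y :=
            ⟨hxy, Or.inr (Or.inl (by rw [hxi, hyi]))⟩
          have hval := C.valid hadj
          simp only [hF, Finset.mem_filter, Finset.mem_univ, true_and] at hx hy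
          rw [hx, hy] at hval; exact hval rfl
        calc F.card = (F.image Sigma.fst).card := hcardT.symm
          _ ≤ n := aux_cycle_indep _ hT
      have hcardV : ∑ i, ks i = Fintype.card (Σ i : Fin (2*n+1), Fin (ks i)) := by
        simp [Fintype.card_sigma]
      have hfib : (Finset.univ : Finset (Σ i : Fin (2*n+1), Fin (ks i))).card =
          ∑ c : Fin k, (Finset.univ.filter (fun x => C x = c)).card :=
        Finset.card_eq_sum_card_fiberwise (fun x _ => Finset.mem_univ _)
      have h3 : ∑ c : Fin k, (Finset.univ.filter
          (fun x : (Σ i : Fin (2*n+1), Fin (ks i)) => C x = c)).card ≤ ∑ _c : Fin k, n :=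
        Finset.sum_le_sum (fun c _ => hbound c)
      simp only [Finset.sum_const, Finset.card_univ, Fintype.card_fin, smul_eq_mul] at h3
      rw [hcardV, ← Finset.card_univ, hfib, Nat.mul_comm n k]
      exact h3
  · rintro ⟨h1, h2⟩
    set K : ℕ → ℕ := fun m => ks ⟨m % (2*n+1), Nat.mod_lt m hp0⟩ with hK
    have hKlt : ∀ i : Fin (2*n+1), K i.val = ks i := by
      intro i
      simp only [hK]
      congr 1
      exact Fin.ext (Nat.mod_eq_of_lt i.isLt)
    have hKsucc : ∀ m, K (m+1) = ks (⟨m % (2*n+1), Nat.mod_lt m hp0⟩ + 1) := by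
      intro m
      simp only [hK]
      congr 1
      apply Fin.ext
      rw [hvadd]
      simp [Nat.mod_add_mod]
    have hKk : ∀ m, K m + K (m+1) ≤ k := by
      intro m
      rw [hKsucc]
      exact h1 _
    have hK1 : ∀ m, 1 ≤ K m := fun m => hks _
    set cap : ℕ → ℕ := fun m => k - K m - K (m+1) with hcap
    set g : ℕ → ℕ := fun m =>
      min (cap m) ((n*k - ∑ j ∈ Finset.range (2*n+1), K j) - ∑ j ∈ Finset.range m, cap j)
      with hg
    set a : ℕ → ℕ := fun m => ∑ j ∈ Finset.range m, (K j + g j) with ha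
    have hS : ∑ i : Fin (2*n+1), ks i = ∑ j ∈ Finset.range (2*n+1), K j := by
      rw [← Fin.sum_univ_eq_sum_range]
      exact Finset.sum_congr rfl (fun i _ => (hKlt i).symm)
    have hSnk : ∑ j ∈ Finset.range (2*n+1), K j ≤ n * k := by rw [← hS]; exact h2
    have hshift : ∑ j ∈ Finset.range (2*n+1), K (j+1) = ∑ j ∈ Finset.range (2*n+1), K j := by
      have e1 := Finset.sum_range_succ' K (2*n+1)
      have e2 := Finset.sum_range_succ K (2*n+1)
      have e3 : K (2*n+1) = K 0 := by
        simp only [hK]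
        congr 1
        exact Fin.ext (by simp)
      omega
    have hcapsum : ∑ j ∈ Finset.range (2*n+1), cap j
        + 2 * ∑ j ∈ Finset.range (2*n+1), K j = 2 * (n * k) + k := by
      have hterm : ∀ j ∈ Finset.range (2*n+1), cap j + (K j + K (j+1)) = k := by
        intro j _
        have := hKk j
        simp only [hcap]
        omega
      have e : ∑ j ∈ Finset.range (2*n+1), (cap j + (K j + K (j+1)))
          = ∑ _j ∈ Finset.range (2*n+1), k := Finset.sum_congr rfl hterm
      rw [Finset.sum_add_distrib, Finset.sum_add_distrib, hshift] at e
      simp only [Finset.sum_const, Finset.card_range, smul_eq_mul] at e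
      have hr : (2*n+1) * k = 2 * (n*k) + k := by ring
      omega
    have hgsum : ∑ j ∈ Finset.range (2*n+1), g j
        = n*k - ∑ j ∈ Finset.range (2*n+1), K j := by
      have e := aux_greedy cap (n*k - ∑ j ∈ Finset.range (2*n+1), K j) (2*n+1)
      have e2 : ∑ j ∈ Finset.range (2*n+1), g j
          = ∑ j ∈ Finset.range (2*n+1),
            min (cap j) ((n*k - ∑ j ∈ Finset.range (2*n+1), K j) - ∑ i ∈ Finset.range j, cap i) :=
        Finset.sum_congr rfl (fun j _ => by rw [hg])
      rw [e2, e]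
      omega
    have hap : a (2*n+1) = n * k := by
      simp only [ha]
      rw [Finset.sum_add_distrib, hgsum]
      omega
    have hgcap : ∀ m, g m ≤ cap m := fun m => by rw [hg]; exact min_le_left _ _
    have hmodlt : ∀ x : ℕ, x % k < k := fun x => Nat.mod_lt _ (by omega)
    have L : ∀ m v w, v < K m → w < K (m+1) → (a m + v) % k ≠ (a (m+1) + w) % k := by
      intro m v w hv hw
      have hstep : a (m+1) = a m + (K m + g m) := Finset.sum_range_succ _ m
      have hck := hKk m
      have hgc : g m ≤ k - K m - K (m+1) := hgcap m
      have he : a (m+1) + w = (a m + v) + ((K m - v) + g m + w) := by omega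
      rw [he]
      exact aux_mod_ne k (a m + v) _ (by omega) (by omega)
    have edge : ∀ (i j : Fin (2*n+1)) (v : Fin (ks i)) (w : Fin (ks j)), i + 1 = j →
        ((a i.val + v.val) % k : ℕ) ≠ (a j.val + w.val) % k := by
      intro i j v w hij
      have hv : v.val < K i.val := by rw [hKlt]; exact v.isLt
      have hjv : j.val = (i.val + 1) % (2*n+1) := by rw [← hij, hvadd]
      rcases Nat.lt_or_ge (i.val + 1) (2*n+1) with hlt | hge
      · have hj : j.val = i.val + 1 := by rw [hjv, Nat.mod_eq_of_lt hlt]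
        have hw : w.val < K (i.val + 1) := by rw [← hj, hKlt]; exact w.isLt
        rw [hj]
        exact L i.val v.val w.val hv hw
      · have hival : i.val + 1 = 2*n+1 := by have := i.isLt; omega
        have hj0 : j.val = 0 := by rw [hjv, hival, Nat.mod_self]
        have hK0 : K (i.val + 1) = ks j := by
          rw [hival]
          simp only [hK]
          congr 1
          exact Fin.ext (by simp [hj0])
        have hw : w.val < K (i.val + 1) := by rw [hK0]; exact w.isLt
        have hL := L i.val v.val w.val hv hw
        rw [hival, hap] at hL
        have ha0 : a j.val = 0 := by rw [hj0]; simp [ha]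
        have hrw : (n*k + w.val) % k = (a j.val + w.val) % k := by
          rw [ha0, Nat.zero_add, Nat.add_comm, Nat.add_mul_mod_self_right]
        rw [hrw] at hL
        exact hL
    refine ⟨SimpleGraph.Coloring.mk
      (fun x => ⟨(a x.1.val + x.2.val) % k, hmodlt _⟩) ?_⟩
    rintro ⟨i, v⟩ ⟨j, w⟩ hadj heq
    obtain ⟨hne, hcase⟩ := hadj
    have heqv : (a i.val + v.val) % k = (a j.val + w.val) % k := congrArg Fin.val heq
    rcases hcase with hsame | hnext | hprev
    · obtain rfl : i = j := hsame
      have hvw : v.val ≠ w.val := by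
        intro h
        exact hne (by rw [Fin.ext h])
      have hkik : ks i ≤ k := by
        have hx := h1 i
        have hy := hks (i+1)
        omega
      have hvk : v.val < k := lt_of_lt_of_le v.isLt hkik
      have hwk : w.val < k := lt_of_lt_of_le w.isLt hkik
      rcases Nat.lt_or_ge v.val w.val with hlt | hge
      · exact aux_mod_ne k (a i.val + v.val) (w.val - v.val) (by omega) (by omega)
          (by rw [show a i.val + v.val + (w.val - v.val) = a i.val + w.val by omega]; exact heqv)
      · exact aux_mod_ne k (a i.val + w.val) (v.val - w.val) (by omega) (by omega)
          (by rw [show a i.val + w.val + (v.val - w.val) = a i.val + v.val by omega]; exact heqv.symm)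
    · exact edge i j v w hnext heqv
    · exact edge j i w v hprev heqv.symm
end

section
/- Let G be a graph on exactly 10 vertices containing an induced subgraph isomorphic to C̄_7 with vertices v_1, …, v_7 (so v_i and v_j are adjacent in G if and only if j ≢ i ± 1 (mod 7)), and let w_1, w_2, w_3 be the three remaining vertices. If for some index i (modulo 7) the pairs w_1v_i, w_2v_{i+1}, w_3v_{i+2} are all non-edges of G, or the pairs w_1v_i, w_2v_{i+1}, w_3v_{i+4} are all non-edges of G, then G is 5-colorable. -/
open SimpleGraph Finset

theorem aux5col {V : Type*} [Fintype V] (G : SimpleGraph V)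
    (hcard : Fintype.card V = 10)
    (v : Fin 7 → V) (hvinj : Function.Injective v)
    (hv : ∀ i j : Fin 7, G.Adj (v i) (v j) ↔ ((cycleG 7)ᶜ).Adj i j)
    (w₁ w₂ w₃ : V)
    (hw : ∀ i, w₁ ≠ v i ∧ w₂ ≠ v i ∧ w₃ ≠ v i)
    (hne : w₁ ≠ w₂ ∧ w₁ ≠ w₃ ∧ w₂ ≠ w₃)
    (i : Fin 7) (g : Fin 7 → Fin 5)
    (h1 : ∀ d, g d = 0 → ¬ G.Adj w₁ (v (i + d)))
    (h2 : ∀ d, g d = 1 → ¬ G.Adj w₂ (v (i + d)))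
    (h3 : ∀ d, g d = 2 → ¬ G.Adj w₃ (v (i + d)))
    (hgadj : ∀ d e : Fin 7, g d = g e → d = e ∨ d + 1 = e ∨ e + 1 = d) :
    G.Colorable 5 := by
  classical
  have hsurj : ∀ x : V, x = w₁ ∨ x = w₂ ∨ x = w₃ ∨ ∃ j, x = v j := by
    by_contra hc
    push_neg at hc
    obtain ⟨x, hx1, hx2, hx3, hx4⟩ := hc
    have hle : (insert x (insert w₁ (insert w₂ (insert w₃ (Finset.univ.image v)))) : Finset V).card ≤ 10 :=
      hcard ▸ Finset.card_le_univ _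
    have him : (Finset.univ.image v).card = 7 := by
      rw [Finset.card_image_of_injective _ hvinj, Finset.card_univ, Fintype.card_fin]
    have m3 : w₃ ∉ Finset.univ.image v := by
      simp only [Finset.mem_image, Finset.mem_univ, true_and, not_exists]
      exact fun j hj => (hw j).2.2 hj.symm
    have m2 : w₂ ∉ insert w₃ (Finset.univ.image v) := by
      simp only [Finset.mem_insert, Finset.mem_image, Finset.mem_univ, true_and, not_exists, not_or]
      exact ⟨hne.2.2, fun j hj => (hw j).2.1 hj.symm⟩
    have m1 : w₁ ∉ insert w₂ (insert w₃ (Finset.univ.image v)) := by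
      simp only [Finset.mem_insert, Finset.mem_image, Finset.mem_univ, true_and, not_exists, not_or]
      exact ⟨hne.1, hne.2.1, fun j hj => (hw j).1 hj.symm⟩
    have m0 : x ∉ insert w₁ (insert w₂ (insert w₃ (Finset.univ.image v))) := by
      simp only [Finset.mem_insert, Finset.mem_image, Finset.mem_univ, true_and, not_exists, not_or]
      exact ⟨hx1, hx2, hx3, fun j hj => hx4 j hj.symm⟩
    rw [Finset.card_insert_of_notMem m0, Finset.card_insert_of_notMem m1,
      Finset.card_insert_of_notMem m2, Finset.card_insert_of_notMem m3, him] at hle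
    omega
  set c : V → Fin 5 := fun x =>
    if x = w₁ then 0 else if x = w₂ then 1 else if x = w₃ then 2
    else if hx : ∃ j, x = v j then g (hx.choose - i) else 0 with hc
  have hcv : ∀ j, c (v j) = g (j - i) := by
    intro j
    have hx : ∃ k, v j = v k := ⟨j, rfl⟩
    have : hx.choose = j := hvinj hx.choose_spec.symm
    simp only [hc]
    rw [if_neg (fun h => (hw j).1 h.symm), if_neg (fun h => (hw j).2.1 h.symm),
      if_neg (fun h => (hw j).2.2 h.symm), dif_pos hx, this]
  have hcw1 : c w₁ = 0 := by simp [hc]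
  have hcw2 : c w₂ = 1 := by simp [hc, hne.1.symm]
  have hcw3 : c w₃ = 2 := by simp [hc, hne.2.1.symm, hne.2.2.symm]
  refine ⟨SimpleGraph.Coloring.mk c ?_⟩
  intro a b hab hcab
  have hvv : ∀ j k : Fin 7, G.Adj (v j) (v k) → c (v j) = c (v k) → False := by
    intro j k hadj heq
    rw [hcv, hcv] at heq
    obtain ⟨hjk, hnadj⟩ := (hv j k).mp hadj
    rcases hgadj _ _ heq with h' | h' | h'
    · exact hjk (by rwa [sub_left_inj] at h')
    · refine hnadj ⟨hjk, Or.inl ?_⟩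
      have := congrArg (· + i) h'
      simpa [sub_add_cancel, add_right_comm] using this
    · refine hnadj ⟨hjk, Or.inr ?_⟩
      have := congrArg (· + i) h'
      simpa [sub_add_cancel, add_right_comm] using this
  have hwv : ∀ (w : V) (cw : Fin 5), c w = cw →
      (∀ d, g d = cw → ¬ G.Adj w (v (i + d))) →
      ∀ j, G.Adj w (v j) → c w = c (v j) → False := by
    intro w cw hcw hne' j hadj heq
    rw [hcw, hcv] at heq
    have := hne' (j - i) heq.symm
    rw [add_sub_cancel] at this
    exact this hadj
  rcases hsurj a with rfl | rfl | rfl | ⟨j, rfl⟩ <;>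
    rcases hsurj b with rfl | rfl | rfl | ⟨k, rfl⟩
  · exact G.irrefl hab
  · rw [hcw1, hcw2] at hcab; exact absurd hcab (by decide)
  · rw [hcw1, hcw3] at hcab; exact absurd hcab (by decide)
  · exact hwv _ 0 hcw1 h1 k hab hcab
  · rw [hcw1, hcw2] at hcab; exact absurd hcab (by decide)
  · exact G.irrefl hab
  · rw [hcw2, hcw3] at hcab; exact absurd hcab (by decide)
  · exact hwv _ 1 hcw2 h2 k hab hcab
  · rw [hcw1, hcw3] at hcab; exact absurd hcab (by decide)
  · rw [hcw2, hcw3] at hcab; exact absurd hcab (by decide)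
  · exact G.irrefl hab
  · exact hwv _ 2 hcw3 h3 k hab hcab
  · exact hwv _ 0 hcw1 h1 j hab.symm hcab.symm
  · exact hwv _ 1 hcw2 h2 j hab.symm hcab.symm
  · exact hwv _ 2 hcw3 h3 j hab.symm hcab.symm
  · exact hvv j k hab hcab

theorem nonedge_pattern_fiveColorable {V : Type*} [Fintype V] (G : SimpleGraph V)
    (hcard : Fintype.card V = 10)
    (v : Fin 7 → V) (hvinj : Function.Injective v)
    (hv : ∀ i j : Fin 7, G.Adj (v i) (v j) ↔ ((cycleG 7)ᶜ).Adj i j)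
    (w₁ w₂ w₃ : V)
    (hw : ∀ i, w₁ ≠ v i ∧ w₂ ≠ v i ∧ w₃ ≠ v i)
    (hne : w₁ ≠ w₂ ∧ w₁ ≠ w₃ ∧ w₂ ≠ w₃)
    (h : ∃ i : Fin 7,
      (¬ G.Adj w₁ (v i) ∧ ¬ G.Adj w₂ (v (i + 1)) ∧ ¬ G.Adj w₃ (v (i + 2))) ∨
      (¬ G.Adj w₁ (v i) ∧ ¬ G.Adj w₂ (v (i + 1)) ∧ ¬ G.Adj w₃ (v (i + 4)))) :
    G.Colorable 5 := by
  obtain ⟨i, hA | hB⟩ := h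
  · refine aux5col G hcard v hvinj hv w₁ w₂ w₃ hw hne i ![0,1,2,3,3,4,4] ?_ ?_ ?_ (by decide)
    · have h0 : ∀ d : Fin 7, (![0,1,2,3,3,4,4] : Fin 7 → Fin 5) d = 0 → d = 0 := by decide
      intro d hd; rw [h0 d hd, add_zero]; exact hA.1
    · have h0 : ∀ d : Fin 7, (![0,1,2,3,3,4,4] : Fin 7 → Fin 5) d = 1 → d = 1 := by decide
      intro d hd; rw [h0 d hd]; exact hA.2.1
    · have h0 : ∀ d : Fin 7, (![0,1,2,3,3,4,4] : Fin 7 → Fin 5) d = 2 → d = 2 := by decide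
      intro d hd; rw [h0 d hd]; exact hA.2.2
  · refine aux5col G hcard v hvinj hv w₁ w₂ w₃ hw hne i ![0,1,3,3,2,4,4] ?_ ?_ ?_ (by decide)
    · have h0 : ∀ d : Fin 7, (![0,1,3,3,2,4,4] : Fin 7 → Fin 5) d = 0 → d = 0 := by decide
      intro d hd; rw [h0 d hd, add_zero]; exact hB.1
    · have h0 : ∀ d : Fin 7, (![0,1,3,3,2,4,4] : Fin 7 → Fin 5) d = 1 → d = 1 := by decide
      intro d hd; rw [h0 d hd]; exact hB.2.1
    · have h0 : ∀ d : Fin 7, (![0,1,3,3,2,4,4] : Fin 7 → Fin 5) d = 2 → d = 4 := by decide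
      intro d hd; rw [h0 d hd]; exact hB.2.2
end
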